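/- arXiv:2412.10911 — 3 statements merged into one kernel-verified Lean document; each statement's English description precedes it below -/
import Mathlib

section
/- Let f : ℝ × ℝ → ℝ be differentiable, let x₀, h ∈ ℝ, and suppose x¹, x* ∈ ℝ and y⁰, y* ∈ ℝ satisfy x¹ = x₀ + h·f(x¹, y⁰) and x* = x₀ + h·f(x*, y*). If 1 − h·(∂f/∂x)(c) ≠ 0 for every point c on the segment joining (x*, y*) and (x¹, y⁰) in ℝ², then there exists a point c on that segment such that x¹ − x* = ( h·(∂f/∂y)(c) / (1 − h·(∂f/∂x)(c)) )·(y⁰ − y*). -/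
/-- Corrector-step error formula `e_x = (h·f_y)/(1 − h·f_x)·e_y` for the backward Euler
method: if `1 − h·∂f/∂x(c) ≠ 0` for every `c` on the segment joining `(x*, y*)` and
`(x¹, y⁰)`, then there is a point `c` on that segment with
`x¹ − x* = (h·∂f/∂y(c) / (1 − h·∂f/∂x(c)))·(y⁰ − y*)`. -/
theorem backward_euler_corrector_error_formula
    (f : ℝ × ℝ → ℝ) (hf : Differentiable ℝ f)
    (x₀ h x₁ xs y₀ ys : ℝ)
    (hx₁ : x₁ = x₀ + h * f (x₁, y₀))
    (hxs : xs = x₀ + h * f (xs, ys))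
    (hden : ∀ c ∈ segment ℝ ((xs, ys) : ℝ × ℝ) (x₁, y₀), 1 - h * fderiv ℝ f c (1, 0) ≠ 0) :
    ∃ c ∈ segment ℝ ((xs, ys) : ℝ × ℝ) (x₁, y₀),
      x₁ - xs = (h * fderiv ℝ f c (0, 1)) / (1 - h * fderiv ℝ f c (1, 0)) * (y₀ - ys) := by
  set v : ℝ × ℝ := ((x₁, y₀) : ℝ × ℝ) - (xs, ys) with hv
  set φ : ℝ → ℝ × ℝ := fun t => (xs, ys) + t • v with hφ
  have hφderiv : ∀ t : ℝ, HasDerivAt φ v t := by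
    intro t
    have : HasDerivAt (fun t : ℝ => t • v) v t := by
      simpa using (hasDerivAt_id t).smul_const v
    simpa [hφ] using this.const_add ((xs, ys) : ℝ × ℝ)
  set G : ℝ → ℝ := fun t => (xs + t * (x₁ - xs)) - x₀ - h * f (φ t) with hG
  have hGderiv : ∀ t : ℝ,
      HasDerivAt G ((x₁ - xs) - h * (fderiv ℝ f (φ t)) v) t := by
    intro t
    have h1 : HasDerivAt (fun t : ℝ => xs + t * (x₁ - xs)) (x₁ - xs) t := by
      simpa using ((hasDerivAt_id t).mul_const (x₁ - xs)).const_add xs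
    have h2 : HasDerivAt (fun t => f (φ t)) ((fderiv ℝ f (φ t)) v) t :=
      (hf (φ t)).hasFDerivAt.comp_hasDerivAt t (hφderiv t)
    exact ((h1.sub_const x₀).sub (h2.const_mul h))
  have hG0 : G 0 = 0 := by
    simp [hG, hφ]
    linarith [hxs]
  have hG1 : G 1 = 0 := by
    have : φ 1 = (x₁, y₀) := by simp [hφ, hv]
    simp [hG, this]
    linarith [hx₁]
  have hmem : ∀ t ∈ Set.Icc (0:ℝ) 1, φ t ∈ segment ℝ ((xs, ys) : ℝ × ℝ) (x₁, y₀) := by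
    intro t ht
    rw [segment_eq_image']
    exact ⟨t, ht, rfl⟩
  obtain ⟨t, ht, htz⟩ := exists_hasDerivAt_eq_slope G
      (fun t => (x₁ - xs) - h * (fderiv ℝ f (φ t)) v) (by norm_num : (0:ℝ) < 1)
      (fun t _ => (hGderiv t).continuousAt.continuousWithinAt)
      (fun t _ => hGderiv t)
  have htc : φ t ∈ segment ℝ ((xs, ys) : ℝ × ℝ) (x₁, y₀) :=
    hmem t ⟨le_of_lt ht.1, le_of_lt ht.2⟩
  refine ⟨φ t, htc, ?_⟩
  rw [hG0, hG1] at htz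
  have hz : (x₁ - xs) - h * (fderiv ℝ f (φ t)) v = 0 := by
    simpa using htz
  have hvdecomp : (fderiv ℝ f (φ t)) v
      = (x₁ - xs) * (fderiv ℝ f (φ t)) (1, 0) + (y₀ - ys) * (fderiv ℝ f (φ t)) (0, 1) := by
    have : v = (x₁ - xs) • ((1:ℝ), (0:ℝ)) + (y₀ - ys) • ((0:ℝ), (1:ℝ)) := by
      simp [hv, Prod.ext_iff]
    rw [this, map_add, map_smul, map_smul]
    simp
  rw [hvdecomp] at hz
  have hd := hden (φ t) htc
  field_simp
  nlinarith [hz]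
end

section
/- Let F be a real normed vector space, let h₁ > 0 and h₂ > 0, let y : ℝ → F be twice differentiable on the interval [t−h₁, t+h₂], and suppose ‖y″(s)‖ ≤ M for all s ∈ [t−h₁, t+h₂]. Define the linear extrapolation ỹ = y(t) + h₂·(y(t) − y(t−h₁))/h₁. Then ‖ỹ − y(t+h₂)‖ ≤ (M/2)·h₂·(h₁ + h₂). In particular, if h₁ = h₂ = h then ‖ỹ − y(t+h)‖ ≤ M·h², so the prediction error is O(h²). -/
open Set

/-- First-order Taylor bound at the left endpoint: if `f'` is a derivative of `f` and `f''`
a derivative of `f'` on `[a,b]`, with `‖f''‖ ≤ M`, then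
`‖f b - f a - (b-a) • f' a‖ ≤ M/2 * (b-a)^2`. -/
lemma taylor_left_endpoint {E : Type*} [NormedAddCommGroup E] [NormedSpace ℝ E]
    (f f' f'' : ℝ → E) (a b M : ℝ) (hab : a ≤ b)
    (hf : ∀ x ∈ Icc a b, HasDerivWithinAt f (f' x) (Icc a b) x)
    (hf' : ∀ x ∈ Icc a b, HasDerivWithinAt f' (f'' x) (Icc a b) x)
    (hM : ∀ x ∈ Icc a b, ‖f'' x‖ ≤ M) :
    ‖f b - f a - (b - a) • f' a‖ ≤ M / 2 * (b - a) ^ 2 := by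
  -- Lipschitz bound on f'
  have hlip : ∀ x ∈ Icc a b, ‖f' x - f' a‖ ≤ M * (x - a) :=
    norm_image_sub_le_of_norm_deriv_le_segment' hf'
      (fun x hx => hM x (Ico_subset_Icc_self hx))
  set g : ℝ → E := fun x => f x - f a - (x - a) • f' a with hg
  have hgd : ∀ x ∈ Icc a b, HasDerivWithinAt g (f' x - f' a) (Icc a b) x := by
    intro x hx
    have h1 : HasDerivWithinAt (fun x : ℝ => (x - a) • f' a) ((1 : ℝ) • f' a) (Icc a b) x := by
      simpa using (((hasDerivAt_id x).sub (hasDerivAt_const x a)).smul_const (f' a)).hasDerivWithinAt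
    have h3 := ((hf x hx).sub (hasDerivWithinAt_const x _ (f a))).sub h1
    simp only [sub_zero, one_smul] at h3
    exact h3
  have hgc : ContinuousOn g (Icc a b) := fun x hx => (hgd x hx).continuousWithinAt
  have hgr : ∀ x ∈ Ico a b, HasDerivWithinAt g (f' x - f' a) (Ici x) x := fun x hx =>
    (hgd x (Ico_subset_Icc_self hx)).mono_of_mem_nhdsWithin (Icc_mem_nhdsGE_of_mem hx)
  have hB : ∀ x : ℝ, HasDerivAt (fun x => M / 2 * (x - a) ^ 2) (M * (x - a)) x := by
    intro x
    have : HasDerivAt (fun x : ℝ => M / 2 * (x - a) ^ 2)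
        (M / 2 * (2 * (x - a) ^ 1 * 1)) x := by
      simpa using (((hasDerivAt_id x).sub (hasDerivAt_const x a)).pow 2).const_mul (M / 2)
    convert this using 1; ring
  have key := image_norm_le_of_norm_deriv_right_le_deriv_boundary hgc hgr
    (B := fun x => M / 2 * (x - a) ^ 2) (by simp [g]) hB
    (fun x hx => hlip x (Ico_subset_Icc_self hx))
  simpa [g] using key (right_mem_Icc.2 hab)

/-- Accuracy of the proposed algebraic prediction scheme (linear extrapolation):
if `y` is twice differentiable on `[t−h₁, t+h₂]` with `‖y″‖ ≤ M` there, and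
`yPred = y(t) + h₂·(y(t) − y(t−h₁))/h₁`, then `‖yPred − y(t+h₂)‖ ≤ (M/2)·h₂·(h₁+h₂)`;
in particular for `h₁ = h₂ = h` the prediction error is at most `M·h²`. -/
theorem algebraic_prediction_accuracy
    {F : Type*} [NormedAddCommGroup F] [NormedSpace ℝ F]
    (y y' y'' : ℝ → F) (t h₁ h₂ M : ℝ) (hh₁ : 0 < h₁) (hh₂ : 0 < h₂)
    (hy' : ∀ s ∈ Set.Icc (t - h₁) (t + h₂),
      HasDerivWithinAt y (y' s) (Set.Icc (t - h₁) (t + h₂)) s)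
    (hy'' : ∀ s ∈ Set.Icc (t - h₁) (t + h₂),
      HasDerivWithinAt y' (y'' s) (Set.Icc (t - h₁) (t + h₂)) s)
    (hM : ∀ s ∈ Set.Icc (t - h₁) (t + h₂), ‖y'' s‖ ≤ M)
    (yPred : F) (hyPred : yPred = y t + (h₂ / h₁) • (y t - y (t - h₁))) :
    ‖yPred - y (t + h₂)‖ ≤ (M / 2) * h₂ * (h₁ + h₂) ∧
      (h₁ = h₂ → ‖yPred - y (t + h₂)‖ ≤ M * h₂ ^ 2) := by
  have hsub1 : Icc t (t + h₂) ⊆ Icc (t - h₁) (t + h₂) :=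
    Icc_subset_Icc (by linarith) le_rfl
  have hsub2 : Icc (t - h₁) t ⊆ Icc (t - h₁) (t + h₂) :=
    Icc_subset_Icc le_rfl (by linarith)
  -- forward Taylor on [t, t+h₂]
  have fwd : ‖y (t + h₂) - y t - h₂ • y' t‖ ≤ M / 2 * h₂ ^ 2 := by
    have := taylor_left_endpoint y y' y'' t (t + h₂) M (by linarith)
      (fun x hx => (hy' x (hsub1 hx)).mono hsub1)
      (fun x hx => (hy'' x (hsub1 hx)).mono hsub1)
      (fun x hx => hM x (hsub1 hx))
    simpa using this
  -- backward Taylor via reflection on [t-h₁, t]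
  have bwd : ‖y (t - h₁) - y t + h₁ • y' t‖ ≤ M / 2 * h₁ ^ 2 := by
    set c : ℝ := 2 * t - h₁ with hc
    have hmaps : MapsTo (fun s : ℝ => c - s) (Icc (t - h₁) t) (Icc (t - h₁) t) := by
      intro s hs; simp only [mem_Icc] at hs ⊢; constructor <;> [skip; skip] <;> simp [hc] <;> linarith
    have hhderiv : ∀ s : ℝ, HasDerivAt (fun s : ℝ => c - s) (-1) s := by
      intro s; simpa using (hasDerivAt_id s).const_sub c
    have hz : ∀ x ∈ Icc (t - h₁) t,
        HasDerivWithinAt (fun s => y (c - s)) ((-1 : ℝ) • y' (c - x)) (Icc (t - h₁) t) x := by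
      intro x hx
      exact HasDerivWithinAt.scomp x ((hy' (c - x) (hsub2 (hmaps hx))).mono hsub2)
        ((hhderiv x).hasDerivWithinAt) hmaps
    have hz' : ∀ x ∈ Icc (t - h₁) t,
        HasDerivWithinAt (fun s => (-1 : ℝ) • y' (c - s)) (y'' (c - x)) (Icc (t - h₁) t) x := by
      intro x hx
      have := HasDerivWithinAt.scomp x (t' := Icc (t - h₁) t)
        ((hy'' (c - x) (hsub2 (hmaps hx))).mono hsub2)
        ((hhderiv x).hasDerivWithinAt) hmaps
      have h2 := this.const_smul (-1 : ℝ)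
      convert h2 using 1 <;> simp [smul_smul, Function.comp_def, funext_iff, Pi.neg_apply]
    have := taylor_left_endpoint (fun s => y (c - s)) (fun s => (-1 : ℝ) • y' (c - s))
      (fun s => y'' (c - s)) (t - h₁) t M (by linarith) hz hz'
      (fun x hx => hM (c - x) (hsub2 (hmaps hx)))
    have hca : c - (t - h₁) = t := by ring
    have hcb : c - t = t - h₁ := by ring
    simp only [hca, hcb] at this
    have : ‖y (t - h₁) - y t - (t - (t - h₁)) • ((-1 : ℝ) • y' t)‖
        ≤ M / 2 * (t - (t - h₁)) ^ 2 := this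
    have heq : (t - (t - h₁)) • ((-1 : ℝ) • y' t) = -(h₁ • y' t) := by
      rw [smul_smul, show (t - (t - h₁)) * (-1 : ℝ) = -h₁ by ring, neg_smul]
    rw [heq] at this
    simpa [sub_neg_eq_add, show t - (t - h₁) = h₁ by ring] using this
  -- combine
  have hkey : yPred - y (t + h₂) =
      -((h₂ / h₁) • (y (t - h₁) - y t + h₁ • y' t)) - (y (t + h₂) - y t - h₂ • y' t) := by
    rw [hyPred]
    have h1 : (h₂ / h₁) • (h₁ • y' t) = h₂ • y' t := by
      rw [smul_smul, div_mul_cancel₀ _ hh₁.ne']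
    rw [smul_add, smul_sub, smul_sub, h1]
    abel
  have hnorm : ‖yPred - y (t + h₂)‖ ≤ (h₂ / h₁) * (M / 2 * h₁ ^ 2) + M / 2 * h₂ ^ 2 := by
    rw [hkey]
    calc ‖-((h₂ / h₁) • (y (t - h₁) - y t + h₁ • y' t)) - (y (t + h₂) - y t - h₂ • y' t)‖
        ≤ ‖-((h₂ / h₁) • (y (t - h₁) - y t + h₁ • y' t))‖ + ‖y (t + h₂) - y t - h₂ • y' t‖ :=
          norm_sub_le _ _
      _ ≤ (h₂ / h₁) * (M / 2 * h₁ ^ 2) + M / 2 * h₂ ^ 2 := by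
          rw [norm_neg, norm_smul, Real.norm_eq_abs, abs_of_pos (div_pos hh₂ hh₁)]
          exact add_le_add (mul_le_mul_of_nonneg_left bwd (div_pos hh₂ hh₁).le) fwd
  have hfinal : ‖yPred - y (t + h₂)‖ ≤ (M / 2) * h₂ * (h₁ + h₂) := by
    refine hnorm.trans (le_of_eq ?_)
    field_simp
  refine ⟨hfinal, fun h12 => ?_⟩
  refine hfinal.trans (le_of_eq ?_)
  subst h12; ring
end

section
/- Let E and F be real normed vector spaces with E complete, let f : E × F → E satisfy ‖f(x, y) − f(x′, y′)‖ ≤ Lₓ·‖x − x′‖ + L_y·‖y − y′‖ for all x, x′ ∈ E and y, y′ ∈ F, with Lₓ, L_y ≥ 0, let h > 0 with h·Lₓ < 1, and let y : ℝ → F be twice differentiable on [t−h, t+h] with ‖y″(s)‖ ≤ M for all s ∈ [t−h, t+h]. Define the predicted algebraic value ỹ = 2·y(t) − y(t−h). Let x₀ ∈ E and suppose x¹, x* ∈ E satisfy x¹ = x₀ + h·f(x¹, ỹ) and x* = x₀ + h·f(x*, y(t+h)). Then ‖x¹ − x*‖ ≤ ( h·L_y / (1 − h·Lₓ) ) ·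 M·h², i.e. the corrected-state error is O(h³). -/
/-- Main accuracy result for the proposed scheme with uniform step size `h`: predicting
the algebraic variable by linear extrapolation `ỹ = 2·y(t) − y(t−h)` (which is
`O(h²)`-accurate) and using it in the backward-Euler corrector yields a corrected-state
error of at most `(h·L_y/(1 − h·Lₓ))·M·h²`, i.e. `O(h³)`. -/
theorem proposed_scheme_state_error_O_h3
    {E F : Type*} [NormedAddCommGroup E] [NormedSpace ℝ E] [CompleteSpace E]
    [NormedAddCommGroup F] [NormedSpace ℝ F]
    (f : E × F → E) (Lx Ly : ℝ) (hLx : 0 ≤ Lx) (hLy : 0 ≤ Ly)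
    (hlip : ∀ x x' : E, ∀ y y' : F,
      ‖f (x, y) - f (x', y')‖ ≤ Lx * ‖x - x'‖ + Ly * ‖y - y'‖)
    (h : ℝ) (hh : 0 < h) (hhL : h * Lx < 1)
    (y y' y'' : ℝ → F) (t M : ℝ)
    (hy' : ∀ s ∈ Set.Icc (t - h) (t + h),
      HasDerivWithinAt y (y' s) (Set.Icc (t - h) (t + h)) s)
    (hy'' : ∀ s ∈ Set.Icc (t - h) (t + h),
      HasDerivWithinAt y' (y'' s) (Set.Icc (t - h) (t + h)) s)
    (hM : ∀ s ∈ Set.Icc (t - h) (t + h), ‖y'' s‖ ≤ M)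
    (yPred : F) (hyPred : yPred = (2 : ℝ) • y t - y (t - h))
    (x₀ x₁ xs : E)
    (hx₁ : x₁ = x₀ + h • f (x₁, yPred))
    (hxs : xs = x₀ + h • f (xs, y (t + h))) :
    ‖x₁ - xs‖ ≤ (h * Ly / (1 - h * Lx)) * (M * h ^ 2) := by
  have hM0 : 0 ≤ M := le_trans (norm_nonneg _) (hM t ⟨by linarith, by linarith⟩)
  -- the difference function g s = y (t+s) + y (t-s) - 2 • y t
  set g : ℝ → F := fun s => y (t + s) + y (t - s) - (2 : ℝ) • y t with hg
  set g' : ℝ → F := fun s => y' (t + s) - y' (t - s) with hg'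
  have hmapsP : Set.MapsTo (fun s : ℝ => t + s) (Set.Icc 0 h) (Set.Icc (t - h) (t + h)) := by
    intro s hs; simp only [Set.mem_Icc] at hs ⊢; constructor <;> linarith
  have hmapsM : Set.MapsTo (fun s : ℝ => t - s) (Set.Icc 0 h) (Set.Icc (t - h) (t + h)) := by
    intro s hs; simp only [Set.mem_Icc] at hs ⊢; constructor <;> linarith
  have hgderiv : ∀ s ∈ Set.Icc (0 : ℝ) h, HasDerivWithinAt g (g' s) (Set.Icc 0 h) s := by
    intro s hs
    have h1 : HasDerivWithinAt (fun s : ℝ => y (t + s)) (y' (t + s)) (Set.Icc 0 h) s := by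
      have hin : HasDerivWithinAt (fun s : ℝ => t + s) 1 (Set.Icc 0 h) s :=
        (hasDerivWithinAt_id s _).const_add t
      have := (hy' (t + s) (hmapsP hs)).scomp (h := fun s : ℝ => t + s) s hin hmapsP
      simpa [Function.comp_def] using this
    have h2 : HasDerivWithinAt (fun s : ℝ => y (t - s)) (-y' (t - s)) (Set.Icc 0 h) s := by
      have hin : HasDerivWithinAt (fun s : ℝ => t - s) (-1) (Set.Icc 0 h) s := by
        exact (hasDerivWithinAt_id s (Set.Icc (0:ℝ) h)).const_sub t
      have := (hy' (t - s) (hmapsM hs)).scomp (h := fun s : ℝ => t - s) s hin hmapsM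
      simpa [Function.comp_def] using this
    have := (h1.add h2).sub_const ((2 : ℝ) • y t)
    simpa [hg, hg', sub_eq_add_neg] using this
  have hgcont : ContinuousOn g (Set.Icc 0 h) := fun s hs =>
    (hgderiv s hs).continuousWithinAt
  -- Lipschitz bound for y' with constant M
  have hy'lip : ∀ a ∈ Set.Icc (t - h) (t + h), ∀ b ∈ Set.Icc (t - h) (t + h),
      ‖y' a - y' b‖ ≤ M * ‖a - b‖ := by
    intro a ha b hb
    exact (convex_Icc _ _).norm_image_sub_le_of_norm_hasDerivWithin_le hy'' hM hb ha
  -- apply the fencing theorem with B s = M * s ^ 2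
  have key : ∀ s ∈ Set.Icc (0 : ℝ) h, ‖g s‖ ≤ M * s ^ 2 := by
    intro s hs
    refine image_norm_le_of_norm_deriv_right_le_deriv_boundary (f' := g')
      (B := fun s => M * s ^ 2) (B' := fun s => M * (2 * s)) hgcont ?_ ?_ ?_ ?_ hs
    · intro x hx
      exact (hgderiv x (Set.Ico_subset_Icc_self hx)).mono_of_mem_nhdsWithin
        (Icc_mem_nhdsGE_of_mem hx)
    · show ‖y (t + 0) + y (t - 0) - (2:ℝ) • y t‖ ≤ M * 0 ^ 2
      rw [add_zero, sub_zero, two_smul]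
      simp
    · intro x
      simpa using ((hasDerivAt_pow 2 x).const_mul M)
    · intro x hx
      have hx' : (0 : ℝ) ≤ x := hx.1
      have := hy'lip (t + x) (hmapsP ⟨hx.1, hx.2.le⟩) (t - x) (hmapsM ⟨hx.1, hx.2.le⟩)
      have hnorm : ‖(t + x) - (t - x)‖ = 2 * x := by
        rw [show (t + x) - (t - x) = 2 * x by ring, Real.norm_eq_abs,
          abs_of_nonneg (by linarith)]
      calc ‖g' x‖ ≤ M * ‖(t + x) - (t - x)‖ := this
        _ = M * (2 * x) := by rw [hnorm]
  have hpredErr : ‖yPred - y (t + h)‖ ≤ M * h ^ 2 := by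
    have := key h ⟨le_of_lt hh, le_refl h⟩
    have hgh : g h = -(yPred - y (t + h)) := by
      simp only [hg, hyPred]; abel
    calc ‖yPred - y (t + h)‖ = ‖g h‖ := by rw [hgh, norm_neg]
      _ ≤ M * h ^ 2 := this
  -- contraction argument
  have hdiff : x₁ - xs = h • (f (x₁, yPred) - f (xs, y (t + h))) := by
    conv_lhs => rw [hx₁, hxs]
    rw [smul_sub]; abel
  have hbound : ‖x₁ - xs‖ ≤ h * (Lx * ‖x₁ - xs‖ + Ly * ‖yPred - y (t + h)‖) :=
    calc ‖x₁ - xs‖ = h * ‖f (x₁, yPred) - f (xs, y (t + h))‖ := by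
          rw [hdiff, norm_smul, Real.norm_eq_abs, abs_of_pos hh]
      _ ≤ h * (Lx * ‖x₁ - xs‖ + Ly * ‖yPred - y (t + h)‖) :=
          mul_le_mul_of_nonneg_left (hlip _ _ _ _) hh.le
  have hpos : 0 < 1 - h * Lx := by linarith
  rw [div_mul_eq_mul_div, le_div_iff₀ hpos]
  nlinarith [mul_le_mul_of_nonneg_left hpredErr (mul_nonneg hh.le hLy), norm_nonneg (x₁ - xs),
    norm_nonneg (yPred - y (t + h))]
end
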